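/- Let m/n < 1/2 be in lowest terms, and write c_{m/n} = 1 0^{κ₁} 1² 0^{κ₂} 1² ⋯ 1² 0^{κ_m} 1 where κ₁ = ⌊n/m⌋ - 1 and κᵢ = ⌊in/m⌋ - ⌊(i-1)n/m⌋ - 2 for 2 ≤ i ≤ m. For 1 ≤ r ≤ m, let c = 1 0^{κ_r + 1} 1² 0^{κ_{r+1}} 1² ⋯ 1² 0^{κ_m} 1. Then c disagrees with c_{m/n} at some position within the shorter of their lengths, and at the first position of disagreement c has symbol 0 while c_{m/n} has symbol 1 (i.e. c has a longer block of 0s at that point, so c is greater in the unimodal order). -/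

import Mathlib

namespace TweakDisagree

def blk (a : ℕ) : List ℕ := 1 :: (List.replicate a 0 ++ [1])

lemma blk_length (a : ℕ) : (blk a).length = a + 2 := by
  simp [blk]

lemma blk_getD_zero (a : ℕ) : (blk a).getD 0 0 = 1 := rfl

lemma blk_getD_mid (a j : ℕ) (h : j < a) : (blk a).getD (j+1) 0 = 0 := by
  show (List.replicate a 0 ++ [1]).getD j 0 = 0
  rw [List.getD_append _ _ _ _ (by simpa using h)]
  simp

lemma blk_getD_last (a : ℕ) : (blk a).getD (a+1) 0 = 1 := by
  show (List.replicate a 0 ++ [1]).getD a 0 = 1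
  rw [List.getD_append_right _ _ _ _ (by simp)]
  simp

def w (l : List ℕ) : List ℕ := (l.map blk).flatten

lemma w_cons (a : ℕ) (l : List ℕ) : w (a :: l) = blk a ++ w l := by
  simp [w]

lemma w_cons_length (a : ℕ) (l : List ℕ) :
    (w (a :: l)).length = a + 2 + (w l).length := by
  rw [w_cons]; simp [blk_length]

lemma disagree : ∀ (k : ℕ) (as bs : List ℕ), k < as.length → k < bs.length →
    (∀ j, j < k → as.getD j 0 = bs.getD j 0) →
    bs.getD k 0 < as.getD k 0 →
    ∃ t, t < min (w as).length (w bs).length ∧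
      (∀ j, j < t → (w as).getD j 0 = (w bs).getD j 0) ∧
      (w as).getD t 0 = 0 ∧ (w bs).getD t 0 = 1 := by
  intro k
  induction k with
  | zero =>
    rintro (_ | ⟨a, as⟩) (_ | ⟨b, bs⟩) ha hb hpre hlt <;> simp at ha hb
    simp only [List.getD_cons_zero] at hlt
    refine ⟨b + 1, ?_, ?_, ?_, ?_⟩
    · rw [w_cons_length, w_cons_length]
      omega
    · intro j hj
      rw [w_cons, w_cons,
        List.getD_append _ _ _ _ (by rw [blk_length]; omega),
        List.getD_append _ _ _ _ (by rw [blk_length]; omega)]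
      match j, hj with
      | 0, _ => rfl
      | (i+1), hj =>
          rw [blk_getD_mid _ _ (by omega), blk_getD_mid _ _ (by omega)]
    · rw [w_cons, List.getD_append _ _ _ _ (by rw [blk_length]; omega)]
      exact blk_getD_mid _ _ (by omega)
    · rw [w_cons, List.getD_append _ _ _ _ (by rw [blk_length]; omega)]
      exact blk_getD_last b
  | succ k ih =>
    rintro (_ | ⟨a, as⟩) (_ | ⟨b, bs⟩) ha hb hpre hlt <;> simp at ha hb
    have hab : a = b := by simpa using hpre 0 (by omega)
    subst hab
    obtain ⟨t, ht, hagree, h0, h1⟩ := ih as bs (by omega) (by omega)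
      (fun j hj => by simpa using hpre (j+1) (by omega)) (by simpa using hlt)
    refine ⟨a + 2 + t, ?_, ?_, ?_, ?_⟩
    · rw [w_cons_length, w_cons_length]; omega
    · intro j hj
      rw [w_cons, w_cons]
      rcases Nat.lt_or_ge j (a+2) with h | h
      · rw [List.getD_append _ _ _ _ (by rw [blk_length]; omega),
          List.getD_append _ _ _ _ (by rw [blk_length]; omega)]
      · rw [List.getD_append_right _ _ _ _ (by rw [blk_length]; omega),
          List.getD_append_right _ _ _ _ (by rw [blk_length]; omega), blk_length]
        exact hagree _ (by omega)
    · rw [w_cons, List.getD_append_right _ _ _ _ (by rw [blk_length]; omega), blk_length]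
      simpa using h0
    · rw [w_cons, List.getD_append_right _ _ _ _ (by rw [blk_length]; omega), blk_length]
      simpa using h1

lemma getD_map_range' (s l : ℕ) (g : ℕ → ℕ) (i : ℕ) (h : i < l) :
    ((List.range' s l).map g).getD i 0 = g (s + i) := by
  rw [List.getD_eq_getElem _ _ (by simpa using h)]
  simp

end TweakDisagree

open TweakDisagree in
/-- the word c = 1 0^{κ_r+1} 1² 0^{κ_{r+1}} 1² ⋯ 1² 0^{κ_m} 1
disagrees with c_{m/n} = 1 0^{κ₁} 1² 0^{κ₂} 1² ⋯ 1² 0^{κ_m} 1 within the shorter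
of their lengths, and at the first disagreement c has symbol 0 while c_{m/n}
has symbol 1 (so c is greater in the unimodal order). -/
theorem tweak_disagree (m n : ℕ) (hm : 0 < m) (h2 : 2 * m < n) (hmn : Nat.Coprime m n)
    (κ : ℕ → ℕ)
    (hκ1 : κ 1 = n / m - 1)
    (hκ : ∀ i, 2 ≤ i → i ≤ m → κ i = i * n / m - (i - 1) * n / m - 2)
    (r : ℕ) (hr1 : 1 ≤ r) (hrm : r ≤ m) :
    ∃ t : ℕ,
      t < min ((((1 :: (List.replicate (κ r + 1) 0 ++ [1])) ::
            (List.range' (r + 1) (m - r)).map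
              (fun i => 1 :: (List.replicate (κ i) 0 ++ [1]))).flatten).length)
          ((((List.range' 1 m).map
              (fun i => 1 :: (List.replicate (κ i) 0 ++ [1]))).flatten).length) ∧
      (∀ j, j < t →
        (((1 :: (List.replicate (κ r + 1) 0 ++ [1])) ::
            (List.range' (r + 1) (m - r)).map
              (fun i => 1 :: (List.replicate (κ i) 0 ++ [1]))).flatten).getD j 0 =
        ((((List.range' 1 m).map
              (fun i => 1 :: (List.replicate (κ i) 0 ++ [1]))).flatten)).getD j 0) ∧
      (((1 :: (List.replicate (κ r + 1) 0 ++ [1])) ::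
          (List.range' (r + 1) (m - r)).map
            (fun i => 1 :: (List.replicate (κ i) 0 ++ [1]))).flatten).getD t 0 = 0 ∧
      ((((List.range' 1 m).map
            (fun i => 1 :: (List.replicate (κ i) 0 ++ [1]))).flatten)).getD t 0 = 1 := by
  classical
  set as : List ℕ := (κ r + 1) :: (List.range' (r + 1) (m - r)).map κ with has
  set bs : List ℕ := (List.range' 1 m).map κ with hbs
  -- basic division facts
  have hone : 2 ≤ n / m := (Nat.le_div_iff_mul_le hm).2 (by omega)
  have hsup : ∀ a b : ℕ, a * n / m + b * n / m ≤ (a + b) * n / m := by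
    intro a b
    apply (Nat.le_div_iff_mul_le hm).2
    have ha := Nat.div_mul_le_self (a * n) m
    have hb := Nat.div_mul_le_self (b * n) m
    calc (a * n / m + b * n / m) * m = a * n / m * m + b * n / m * m := by ring
      _ ≤ a * n + b * n := by omega
      _ = (a + b) * n := by ring
  have hκ1' : κ 1 + 1 = n / m := by omega
  have hκ' : ∀ i, 2 ≤ i → i ≤ m → κ i + 2 + (i - 1) * n / m = i * n / m := by
    intro i h2i him
    have h := hκ i h2i him
    have hs : (i - 1) * n / m + 1 * n / m ≤ ((i - 1) + 1) * n / m := hsup (i - 1) 1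
    rw [one_mul, Nat.sub_add_cancel (by omega)] at hs
    omega
  -- entries of as and bs
  have lenA : as.length = m - r + 1 := by simp [has]
  have lenB : bs.length = m := by simp [hbs]
  have entA0 : as.getD 0 0 = κ r + 1 := rfl
  have entA : ∀ i, i < m - r → as.getD (i + 1) 0 = κ (r + i + 1) := by
    intro i h
    show ((List.range' (r + 1) (m - r)).map κ).getD i 0 = _
    rw [getD_map_range' _ _ _ _ h, show r + 1 + i = r + i + 1 from by omega]
  have entB : ∀ i, i < m → bs.getD i 0 = κ (i + 1) := by
    intro i h
    rw [hbs, getD_map_range' _ _ _ _ h, Nat.add_comm]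
  -- main claim about zero-count sequences
  have main : ∃ k, k < as.length ∧ k < bs.length ∧
      (∀ j, j < k → as.getD j 0 = bs.getD j 0) ∧ bs.getD k 0 < as.getD k 0 := by
    rcases eq_or_lt_of_le hr1 with hr | hr
    · -- r = 1
      refine ⟨0, by omega, by omega, by omega, ?_⟩
      rw [entA0, entB 0 (by omega)]
      show κ 1 < κ r + 1
      rw [← hr]
      omega
    · -- 2 ≤ r
      have hm2 : 2 ≤ m := le_trans hr hrm
      -- strictness from coprimality
      have hstrict : ∀ a, 0 < a → a < m → a * n / m * m + 1 ≤ a * n := by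
        intro a ha ham
        have h1 := Nat.div_mul_le_self (a * n) m
        rcases eq_or_lt_of_le h1 with he | hl
        · exfalso
          have hdvd : m ∣ a * n := ⟨a * n / m, (he.symm).trans (Nat.mul_comm (a * n / m) m)⟩
          have hda : m ∣ a := Nat.Coprime.dvd_of_dvd_mul_right hmn hdvd
          have := Nat.le_of_dvd ha hda
          omega
        · omega
      have hbound : (r - 1) * n / m + (m - r + 1) * n / m + 1 ≤ n := by
        have hA := hstrict (r - 1) (by omega) (by omega)
        have hB := hstrict (m - r + 1) (by omega) (by omega)
        have hab : (r - 1) * n + (m - r + 1) * n = m * n := by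
          have h : (r - 1) + (m - r + 1) = m := by omega
          calc (r - 1) * n + (m - r + 1) * n = ((r - 1) + (m - r + 1)) * n := by ring
            _ = m * n := by rw [h]
        have hdist : ((r - 1) * n / m + (m - r + 1) * n / m) * m
            = (r - 1) * n / m * m + (m - r + 1) * n / m * m := by ring
        have hnm : n * m = m * n := Nat.mul_comm n m
        by_contra hc
        push_neg at hc
        have hge : n * m ≤ ((r - 1) * n / m + (m - r + 1) * n / m) * m :=
          Nat.mul_le_mul_right m (by omega)
        omega
      -- find the first index where the blocks differ
      have hex : ∃ k, (r - 1) * n / m + (k + 1) * n / m + 1 ≤ (r + k) * n / m := by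
        refine ⟨m - r, ?_⟩
        rw [show r + (m - r) = m from by omega, Nat.mul_div_cancel_left n hm]
        exact hbound
      obtain ⟨K, hPK, hKmin, hKle⟩ : ∃ K,
          ((r - 1) * n / m + (K + 1) * n / m + 1 ≤ (r + K) * n / m) ∧
          (∀ j, j < K → (r + j) * n / m < (r - 1) * n / m + (j + 1) * n / m + 1) ∧
          K ≤ m - r := by
        refine ⟨Nat.find hex, Nat.find_spec hex, ?_, Nat.find_min' hex ?_⟩
        · intro j hj
          have := Nat.find_min hex hj
          omega
        · rw [show r + (m - r) = m from by omega, Nat.mul_div_cancel_left n hm]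
          exact hbound
      have hzero : ∀ j, j ≤ K → (r - 1) * n / m + j * n / m = (r + j - 1) * n / m := by
        intro j hj
        cases j with
        | zero => simp
        | succ i =>
          have h1 := hKmin i (by omega)
          have h2 := hsup (r - 1) (i + 1)
          rw [show (r - 1) + (i + 1) = r + i from by omega] at h2
          rw [show r + (i + 1) - 1 = r + i from by omega]
          omega
      refine ⟨K, by omega, by omega, ?_, ?_⟩
      · intro j hj
        cases j with
        | zero =>
          rw [entA0, entB 0 (by omega)]
          show κ r + 1 = κ 1
          have h1 := hκ' r hr hrm
          have hz := hzero 1 (by omega)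
          rw [one_mul, show r + 1 - 1 = r from by omega] at hz
          omega
        | succ i =>
          rw [entA i (by omega), entB (i + 1) (by omega)]
          show κ (r + i + 1) = κ (i + 2)
          have hz1 := hzero (i + 1) (by omega)
          rw [show r + (i + 1) - 1 = r + i from by omega] at hz1
          have hz2 := hzero (i + 2) (by omega)
          rw [show r + (i + 2) - 1 = r + i + 1 from by omega] at hz2
          have hk1 := hκ' (r + i + 1) (by omega) (by omega)
          rw [show r + i + 1 - 1 = r + i from by omega] at hk1
          have hk2 := hκ' (i + 2) (by omega) (by omega)
          rw [show i + 2 - 1 = i + 1 from by omega] at hk2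
          omega
      · cases K with
        | zero =>
          rw [entA0, entB 0 (by omega)]
          show κ 1 < κ r + 1
          have h1 := hκ' r hr hrm
          simp only [Nat.zero_add, Nat.add_zero, one_mul] at hPK
          omega
        | succ i =>
          rw [entA i (by omega), entB (i + 1) (by omega)]
          show κ (i + 2) < κ (r + i + 1)
          have hz1 := hzero (i + 1) (by omega)
          rw [show r + (i + 1) - 1 = r + i from by omega] at hz1
          rw [show r + (i + 1) = r + i + 1 from by omega,
            show i + 1 + 1 = i + 2 from by omega] at hPK
          have hk1 := hκ' (r + i + 1) (by omega) (by omega)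
          rw [show r + i + 1 - 1 = r + i from by omega] at hk1
          have hk2 := hκ' (i + 2) (by omega) (by omega)
          rw [show i + 2 - 1 = i + 1 from by omega] at hk2
          omega
  obtain ⟨k, hka, hkb, hpre, hlt⟩ := main
  obtain ⟨t, ht, hag, h0, h1⟩ := disagree k as bs hka hkb hpre hlt
  have eA : ((1 :: (List.replicate (κ r + 1) 0 ++ [1])) ::
      (List.range' (r + 1) (m - r)).map
        (fun i => 1 :: (List.replicate (κ i) 0 ++ [1]))).flatten = w as := by
    rw [has]
    show _ = ((((κ r + 1) :: (List.range' (r + 1) (m - r)).map κ).map blk)).flatten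
    rw [List.map_cons, List.map_map]
    rfl
  have eB : (((List.range' 1 m).map
      (fun i => 1 :: (List.replicate (κ i) 0 ++ [1]))).flatten) = w bs := by
    rw [hbs]
    show _ = ((((List.range' 1 m).map κ).map blk)).flatten
    rw [List.map_map]
    rfl
  rw [eA, eB]
  exact ⟨t, ht, hag, h0, h1⟩
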